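/- arXiv:2208.11330 — 3 statements merged into one kernel-verified Lean document; each statement's English description precedes it below -/
import Mathlib

section
/- Let f ∈ C¹([0,∞)) ∩ C²((0,∞)) satisfy f(0)=0, f,f',f''>0 on (0,∞), and F(u)=∫_u^∞ ds/f(s) < ∞ for all u>0. If the limit q := lim_{s→0⁺} f'(s)F(s) exists, then q ≥ 1. -/
open MeasureTheory Set Filter Topology

theorem limit_fprime_F_ge_one
    (f : ℝ → ℝ)
    (hf1 : ContDiffOn ℝ 1 f (Ici 0)) (hf2 : ContDiffOn ℝ 2 f (Ioi 0))
    (hf0 : f 0 = 0)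
    (hfpos : ∀ u > (0:ℝ), 0 < f u)
    (hf'pos : ∀ u > (0:ℝ), 0 < deriv f u)
    (hf''pos : ∀ u > (0:ℝ), 0 < deriv (deriv f) u)
    (hint : ∀ u > (0:ℝ), IntegrableOn (fun s => 1 / f s) (Ioi u))
    (F : ℝ → ℝ) (hF : ∀ u > (0:ℝ), F u = ∫ s in Ioi u, 1 / f s)
    (q : ℝ)
    (hq : Tendsto (fun s => deriv f s * F s) (𝓝[>] 0) (𝓝 q)) :
    1 ≤ q := by
  -- f has derivative `deriv f u` at every u > 0
  have hderiv_f : ∀ u > (0:ℝ), HasDerivAt f (deriv f u) u := by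
    intro u hu
    exact ((hf1.differentiableOn one_ne_zero).differentiableAt (Ici_mem_nhds hu)).hasDerivAt
  have hfc : ContinuousOn f (Ici 0) := hf1.continuousOn
  -- continuity of 1/f on Ioi 0
  have hinvc : ContinuousOn (fun s => 1 / f s) (Ioi 0) := by
    intro x hx
    exact (ContinuousAt.continuousWithinAt
      (ContinuousAt.div continuousAt_const
        ((hderiv_f x hx).differentiableAt.continuousAt) (ne_of_gt (hfpos x hx))))
  -- F has derivative -(1/f u) at every u > 0
  have hFderiv : ∀ u > (0:ℝ), HasDerivAt F (-(1 / f u)) u := by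
    intro u hu
    set a := u/2 with ha_def
    have ha : 0 < a := by positivity
    have hau : a < u := by simp only [ha_def]; linarith
    have key : ∀ x ∈ Ioi a, F x = F a - ∫ t in a..x, 1 / f t := by
      intro x hx
      simp only [mem_Ioi] at hx
      have hxpos : 0 < x := ha.trans hx
      have hsplit : F a = (∫ t in Ioc a x, 1 / f t) + F x := by
        rw [hF a ha, hF x hxpos,
          ← MeasureTheory.setIntegral_union (Ioc_disjoint_Ioi le_rfl) measurableSet_Ioi
            ((hint a ha).mono_set Ioc_subset_Ioi_self)
            ((hint a ha).mono_set (Ioi_subset_Ioi hx.le)),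
          Ioc_union_Ioi_eq_Ioi hx.le]
      rw [intervalIntegral.integral_of_le hx.le]
      linarith
    have hii : IntervalIntegrable (fun s => 1 / f s) volume a u :=
      (intervalIntegrable_iff_integrableOn_Ioc_of_le hau.le).mpr
        ((hint a ha).mono_set Ioc_subset_Ioi_self)
    have hmeas : StronglyMeasurableAtFilter (fun s => 1 / f s) (𝓝 u) :=
      hinvc.stronglyMeasurableAtFilter isOpen_Ioi u hu
    have hca : ContinuousAt (fun s => 1 / f s) u :=
      ContinuousAt.div continuousAt_const
        ((hderiv_f u hu).differentiableAt.continuousAt) (ne_of_gt (hfpos u hu))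
    have hI : HasDerivAt (fun x => ∫ t in a..x, 1 / f t) (1 / f u) u :=
      intervalIntegral.integral_hasDerivAt_right hii hmeas hca
    have hI' : HasDerivAt (fun x => F a - ∫ t in a..x, 1 / f t) (-(1 / f u)) u :=
      hI.const_sub (F a)
    exact hI'.congr_of_eventuallyEq
      (Filter.eventuallyEq_of_mem (Ioi_mem_nhds hau) key)
  -- derivative of G = f * F
  have hGderiv : ∀ u > (0:ℝ), HasDerivAt (fun x => f x * F x) (deriv f u * F u - 1) u := by
    intro u hu
    have h := (hderiv_f u hu).mul (hFderiv u hu)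
    have : deriv f u * F u + f u * -(1 / f u) = deriv f u * F u - 1 := by
      field_simp [ne_of_gt (hfpos u hu)]
      ring
    rwa [this] at h
  -- F is nonneg on (0,∞)
  have hFnonneg : ∀ u > (0:ℝ), 0 ≤ F u := by
    intro u hu
    rw [hF u hu]
    apply setIntegral_nonneg measurableSet_Ioi
    intro s hs
    have := hfpos s (hu.trans hs)
    positivity
  -- deriv f strictly mono on Ioi 0
  have hf'C : ContinuousOn (deriv f) (Ioi 0) :=
    hf2.continuousOn_deriv_of_isOpen isOpen_Ioi one_le_two
  have hmono : StrictMonoOn (deriv f) (Ioi 0) := by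
    apply strictMonoOn_of_deriv_pos (convex_Ioi 0) hf'C
    rw [interior_Ioi]
    exact fun x hx => hf''pos x hx
  -- f s ≤ s * deriv f s
  have hfle : ∀ s > (0:ℝ), f s ≤ s * deriv f s := by
    intro s hs
    obtain ⟨c, hc, hceq⟩ := exists_hasDerivAt_eq_slope f (deriv f) hs
      (hfc.mono (Icc_subset_Ici_self.trans (by simp)))
      (fun x hx => hderiv_f x hx.1)
    rw [hf0, sub_zero, sub_zero] at hceq
    have hcle : deriv f c ≤ deriv f s := (hmono.le_iff_le hc.1 hs).mpr hc.2.le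
    have : f s = s * deriv f c := by
      field_simp at hceq
      rw [← hceq]; ring
    rw [this]
    exact mul_le_mul_of_nonneg_left hcle hs.le
  -- G tends to 0 at 0+
  have hG0 : Tendsto (fun s => f s * F s) (𝓝[>] 0) (𝓝 0) := by
    have h1 : Tendsto (fun s => f s / deriv f s) (𝓝[>] 0) (𝓝 0) := by
      apply squeeze_zero'
      · filter_upwards [self_mem_nhdsWithin] with s hs
        exact div_nonneg (hfpos s hs).le (hf'pos s hs).le
      · filter_upwards [self_mem_nhdsWithin] with s hs
        rw [div_le_iff₀ (hf'pos s hs)]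
        exact hfle s hs
      · exact Filter.tendsto_id.mono_left nhdsWithin_le_nhds
    have heq : (fun s => f s * F s) =ᶠ[𝓝[>] (0:ℝ)]
        (fun s => (f s / deriv f s) * (deriv f s * F s)) := by
      filter_upwards [self_mem_nhdsWithin] with s hs
      field_simp [ne_of_gt (hf'pos s hs)]
    rw [tendsto_congr' heq]
    simpa using h1.mul hq
  -- main argument
  by_contra hcon
  push_neg at hcon
  set c := (1 - q) / 2 with hc_def
  have hcpos : 0 < c := by simp only [hc_def]; linarith
  have hev : ∀ᶠ s in 𝓝[>] (0:ℝ), deriv f s * F s < q + c :=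
    hq.eventually_lt_const (by linarith)
  obtain ⟨δ, hδpos, hδ⟩ := (nhdsGT_basis (0:ℝ)).eventually_iff.mp hev
  -- the function H = G + c • id is antitone on Ioo 0 δ
  set H := fun u => f u * F u + c * u with hH_def
  have hHderiv : ∀ u ∈ Ioo (0:ℝ) δ, HasDerivAt H (deriv f u * F u - 1 + c) u := by
    intro u hu
    exact (hGderiv u hu.1).add (by simpa using (hasDerivAt_id u).const_mul c)
  have hHanti : AntitoneOn H (Ioo 0 δ) := by
    apply antitoneOn_of_deriv_nonpos (convex_Ioo 0 δ)
    · intro x hx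
      exact (hHderiv x hx).differentiableAt.continuousAt.continuousWithinAt
    · rw [interior_Ioo]
      intro x hx
      exact (hHderiv x hx).differentiableAt.differentiableWithinAt
    · rw [interior_Ioo]
      intro x hx
      rw [(hHderiv x hx).deriv]
      have := hδ hx
      simp only [hc_def]
      linarith
  set b := δ / 2 with hb_def
  have hbpos : 0 < b := by positivity
  have hbδ : b < δ := by simp only [hb_def]; linarith
  have hbmem : b ∈ Ioo (0:ℝ) δ := ⟨hbpos, hbδ⟩
  have hevle : ∀ᶠ s in 𝓝[>] (0:ℝ), H b ≤ H s := by
    filter_upwards [Ioo_mem_nhdsGT hbpos] with s hs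
    exact hHanti ⟨hs.1, hs.2.trans hbδ⟩ hbmem hs.2.le
  have hH0 : Tendsto H (𝓝[>] (0:ℝ)) (𝓝 0) := by
    have h2 : Tendsto (fun s : ℝ => c * s) (𝓝[>] (0:ℝ)) (𝓝 0) := by
      have := (Filter.tendsto_id.mono_left (nhdsWithin_le_nhds :
        𝓝[>] (0:ℝ) ≤ 𝓝 0)).const_mul c
      simpa using this
    simpa using hG0.add h2
  have hle : H b ≤ 0 := ge_of_tendsto hH0 hevle
  have hpos : 0 < H b := by
    have h1 : 0 ≤ f b * F b := mul_nonneg (hfpos b hbpos).le (hFnonneg b hbpos)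
    have h2 : 0 < c * b := mul_pos hcpos hbpos
    simp only [hH_def]; linarith
  linarith
end

section
/- Suppose F : (0, ε₀] → (0,∞) is C² with F' < 0, F'' > 0, and suppose there is δ ∈ (0,1) such that F''(s)F(s)/(F'(s))² ≤ 1 - δ for all s ∈ (0, ε₀]. Then limsup_{s→0⁺} F(s) < ∞. -/
open MeasureTheory Set Filter Topology

theorem limsup_F_finite_of_key_estimate
    (ε₀ δ : ℝ) (hε₀ : 0 < ε₀) (hδ : δ ∈ Ioo (0:ℝ) 1)
    (F F' F'' : ℝ → ℝ)
    (hd1 : ∀ s ∈ Ioc (0:ℝ) ε₀, HasDerivAt F (F' s) s)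
    (hd2 : ∀ s ∈ Ioc (0:ℝ) ε₀, HasDerivAt F' (F'' s) s)
    (hc : ContinuousOn F'' (Ioc (0:ℝ) ε₀))
    (hFpos : ∀ s ∈ Ioc (0:ℝ) ε₀, 0 < F s)
    (hF'neg : ∀ s ∈ Ioc (0:ℝ) ε₀, F' s < 0)
    (hF''pos : ∀ s ∈ Ioc (0:ℝ) ε₀, 0 < F'' s)
    (hkey : ∀ s ∈ Ioc (0:ℝ) ε₀, F'' s * F s / (F' s) ^ 2 ≤ 1 - δ) :
    IsBoundedUnder (· ≤ ·) (𝓝[>] 0) F := by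
  obtain ⟨hδ0, hδ1⟩ := hδ
  set G : ℝ → ℝ := fun s => -F' s * F s ^ (δ - 1) with hGdef
  have hεmem : ε₀ ∈ Ioc (0:ℝ) ε₀ := ⟨hε₀, le_refl _⟩
  -- derivative of G
  have hG : ∀ s ∈ Ioc (0:ℝ) ε₀, HasDerivAt G
      ((-F'' s) * F s ^ (δ - 1) + (-F' s) * (F' s * (δ - 1) * F s ^ (δ - 1 - 1))) s := by
    intro s hs
    exact ((hd2 s hs).neg).mul (((hd1 s hs)).rpow_const (Or.inl (hFpos s hs).ne'))
  have hint : interior (Ioc (0:ℝ) ε₀) = Ioo 0 ε₀ := interior_Ioc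
  -- the derivative of G is nonneg
  have hGd_nonneg : ∀ s ∈ Ioc (0:ℝ) ε₀,
      0 ≤ (-F'' s) * F s ^ (δ - 1) + (-F' s) * (F' s * (δ - 1) * F s ^ (δ - 1 - 1)) := by
    intro s hs
    have hF := hFpos s hs
    have hkey' : F'' s * F s ≤ (1 - δ) * (F' s) ^ 2 := by
      have := hkey s hs
      have h2 : (0:ℝ) < (F' s) ^ 2 := pow_two_pos_of_ne_zero (hF'neg s hs).ne
      calc F'' s * F s = F'' s * F s / (F' s) ^ 2 * (F' s) ^ 2 := by rw [div_mul_cancel₀ _ h2.ne']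
        _ ≤ (1 - δ) * (F' s) ^ 2 := by nlinarith [this, h2]
    have hpow : F s ^ (δ - 1) = F s ^ (δ - 1 - 1) * F s := by
      rw [← Real.rpow_add_one hF.ne' (δ - 1 - 1)]; ring_nf
    have hp2 : (0:ℝ) < F s ^ (δ - 1 - 1) := Real.rpow_pos_of_pos hF _
    rw [hpow]
    nlinarith [hkey', hp2, sq_nonneg (F' s)]
  have hGmono : MonotoneOn G (Ioc (0:ℝ) ε₀) := by
    apply monotoneOn_of_hasDerivWithinAt_nonneg (convex_Ioc _ _)
      (f' := fun s => (-F'' s) * F s ^ (δ - 1) + (-F' s) * (F' s * (δ - 1) * F s ^ (δ - 1 - 1)))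
    · exact fun s hs => ((hG s hs).continuousAt).continuousWithinAt
    · intro s hs
      rw [hint] at hs ⊢
      exact (hG s (Ioo_subset_Ioc_self hs)).hasDerivWithinAt
    · intro s hs
      rw [hint] at hs
      exact hGd_nonneg s (Ioo_subset_Ioc_self hs)
  set C : ℝ := G ε₀ with hCdef
  have hCpos : 0 < C := by
    have := hF'neg ε₀ hεmem
    have := Real.rpow_pos_of_pos (hFpos ε₀ hεmem) (δ - 1)
    simp only [hCdef, hGdef]
    nlinarith
  have hGC : ∀ s ∈ Ioc (0:ℝ) ε₀, G s ≤ C := fun s hs => hGmono hs hεmem hs.2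
  -- now the function h = F^δ + δ C s
  set h : ℝ → ℝ := fun s => F s ^ δ + δ * C * s with hhdef
  have hhD : ∀ s ∈ Ioc (0:ℝ) ε₀, HasDerivAt h (F' s * δ * F s ^ (δ - 1) + δ * C) s := by
    intro s hs
    exact ((hd1 s hs).rpow_const (Or.inl (hFpos s hs).ne')).add
      (((hasDerivAt_id s).const_mul (δ * C)).congr_deriv (by ring))
  have hhmono : MonotoneOn h (Ioc (0:ℝ) ε₀) := by
    apply monotoneOn_of_hasDerivWithinAt_nonneg (convex_Ioc _ _)
      (f' := fun s => F' s * δ * F s ^ (δ - 1) + δ * C)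
    · exact fun s hs => ((hhD s hs).continuousAt).continuousWithinAt
    · intro s hs
      rw [hint] at hs ⊢
      exact (hhD s (Ioo_subset_Ioc_self hs)).hasDerivWithinAt
    · intro s hs
      rw [hint] at hs
      have hGs := hGC s (Ioo_subset_Ioc_self hs)
      simp only [hGdef] at hGs
      nlinarith
  set M : ℝ := F ε₀ ^ δ + δ * C * ε₀ with hMdef
  have hbound : ∀ s ∈ Ioc (0:ℝ) ε₀, F s ≤ M ^ δ⁻¹ := by
    intro s hs
    have h1 : h s ≤ h ε₀ := hhmono hs hεmem hs.2
    have h2 : F s ^ δ ≤ M := by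
      have : 0 ≤ δ * C * s := mul_nonneg (by positivity) hs.1.le
      simp only [hhdef, hMdef] at h1 ⊢
      nlinarith
    calc F s = (F s ^ δ) ^ δ⁻¹ := by
          rw [Real.rpow_rpow_inv (hFpos s hs).le hδ0.ne']
      _ ≤ M ^ δ⁻¹ := Real.rpow_le_rpow (Real.rpow_nonneg (hFpos s hs).le _) h2 (by positivity)
  apply isBoundedUnder_of_eventually_le (a := M ^ δ⁻¹)
  filter_upwards [Ioo_mem_nhdsGT_of_mem (by constructor <;> simp [hε₀] : (0:ℝ) ∈ Ico 0 ε₀)] with s hs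
  exact hbound s (Ioo_subset_Ioc_self hs)
end

section
/- Let f, g be positive C² functions on (0,∞) with F(s) = ∫_s^∞ dη/f(η) and G(s) = ∫_s^∞ dη/g(η) finite, and let φ(s) := F⁻¹(G(s)). Then φ'(s) = f(φ(s))/g(s) > 0 and φ''(s) = [f(φ(s))/(g(s)² F(φ(s)))] · [f'(φ(s))F(φ(s)) - g'(s)G(s)]. In particular, if f'(φ(s))F(φ(s)) ≥ g'(s)G(s) on an interval, then φ is convex there. -/
open MeasureTheory Set Filter Topology

lemma aux_F_pos (f F : ℝ → ℝ)
    (hpos : ∀ s > (0:ℝ), 0 < f s)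
    (hint : ∀ s > (0:ℝ), IntegrableOn (fun η => 1 / f η) (Ioi s))
    (hF : ∀ s > (0:ℝ), F s = ∫ η in Ioi s, 1 / f η)
    {s : ℝ} (hs : 0 < s) : 0 < F s := by
  rw [hF s hs]
  rw [setIntegral_pos_iff_support_of_nonneg_ae _ (hint s hs)]
  · refine lt_of_lt_of_le ?_ (measure_mono (s := Ioi s) ?_)
    · simp [Real.volume_Ioi]
    · intro x hx
      refine ⟨?_, hx⟩
      simp only [Function.mem_support]
      have := hpos x (lt_trans hs hx)
      positivity
  · refine (ae_restrict_iff' measurableSet_Ioi).2 (ae_of_all _ fun x hx => ?_)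
    have := hpos x (lt_trans hs hx)
    positivity

lemma aux_F_deriv (f F : ℝ → ℝ) (hc : ContinuousOn f (Ioi 0))
    (hpos : ∀ s > (0:ℝ), 0 < f s)
    (hint : ∀ s > (0:ℝ), IntegrableOn (fun η => 1 / f η) (Ioi s))
    (hF : ∀ s > (0:ℝ), F s = ∫ η in Ioi s, 1 / f η)
    {s : ℝ} (hs : 0 < s) : HasDerivAt F (-(1 / f s)) s := by
  have hcinv : ContinuousOn (fun η => 1 / f η) (Ioi 0) :=
    continuousOn_const.div hc (fun x hx => ne_of_gt (hpos x hx))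
  have hsub : ∀ u v : ℝ, 0 < u → u ≤ v →
      F u = (∫ x in Ioc u v, 1 / f x) + F v := by
    intro u v hu huv
    have hv : 0 < v := lt_of_lt_of_le hu huv
    rw [hF u hu, hF v hv, ← setIntegral_union (Ioc_disjoint_Ioi le_rfl) measurableSet_Ioi
      ((hint u hu).mono_set Ioc_subset_Ioi_self) (hint v hv), Ioc_union_Ioi_eq_Ioi huv]
  have key : ∀ v > (0:ℝ), F v = F s - ∫ x in s..v, 1 / f x := by
    intro v hv
    rcases le_or_gt s v with h | h
    · rw [intervalIntegral.integral_of_le h]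
      have := hsub s v hs h
      linarith
    · rw [intervalIntegral.integral_symm, intervalIntegral.integral_of_le h.le]
      have := hsub v s hv h.le
      linarith
  have hint0 : IntervalIntegrable (fun η => 1 / f η) volume s s := by
    constructor <;> simp
  have hd : HasDerivAt (fun v => F s - ∫ x in s..v, 1 / f x) (-(1 / f s)) s :=
    HasDerivAt.const_sub (F s)
      (intervalIntegral.integral_hasDerivAt_right hint0
        (hcinv.stronglyMeasurableAtFilter isOpen_Ioi s hs)
        ((hcinv s hs).continuousAt (isOpen_Ioi.mem_nhds hs)))
  refine hd.congr_of_eventuallyEq ?_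
  filter_upwards [isOpen_Ioi.mem_nhds hs] with v hv using key v hv

lemma aux_main (f g F G Finv φ : ℝ → ℝ)
    (hfsm : ContDiffOn ℝ 2 f (Ioi 0)) (hgsm : ContDiffOn ℝ 2 g (Ioi 0))
    (hfpos : ∀ s > (0:ℝ), 0 < f s) (hgpos : ∀ s > (0:ℝ), 0 < g s)
    (hfint : ∀ s > (0:ℝ), IntegrableOn (fun η => 1 / f η) (Ioi s))
    (hgint : ∀ s > (0:ℝ), IntegrableOn (fun η => 1 / g η) (Ioi s))
    (hF : ∀ s > (0:ℝ), F s = ∫ η in Ioi s, 1 / f η)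
    (hG : ∀ s > (0:ℝ), G s = ∫ η in Ioi s, 1 / g η)
    (hFinv : ∀ σ > (0:ℝ), 0 < Finv σ ∧ F (Finv σ) = σ)
    (hFinv' : ∀ u > (0:ℝ), Finv (F u) = u)
    (hφ : ∀ s, φ s = Finv (G s)) :
    ∀ s > (0:ℝ), 0 < φ s ∧ F (φ s) = G s ∧ HasDerivAt φ (f (φ s) / g s) s := by
  have hfc : ContinuousOn f (Ioi 0) := hfsm.continuousOn
  have hgc : ContinuousOn g (Ioi 0) := hgsm.continuousOn
  have hFd : ∀ s > (0:ℝ), HasDerivAt F (-(1 / f s)) s :=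
    fun s hs => aux_F_deriv f F hfc hfpos hfint hF hs
  have hGd : ∀ s > (0:ℝ), HasDerivAt G (-(1 / g s)) s :=
    fun s hs => aux_F_deriv g G hgc hgpos hgint hG hs
  have hFpos : ∀ s > (0:ℝ), 0 < F s := fun s hs => aux_F_pos f F hfpos hfint hF hs
  have hGpos : ∀ s > (0:ℝ), 0 < G s := fun s hs => aux_F_pos g G hgpos hgint hG hs
  -- F is strictly antitone on Ioi 0
  have hFanti : StrictAntiOn F (Ioi 0) := by
    refine strictAntiOn_of_deriv_neg (convex_Ioi 0)
      (fun x hx => ((hFd x hx).continuousAt).continuousWithinAt) ?_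
    intro x hx
    rw [interior_Ioi] at hx
    rw [(hFd x hx).deriv]
    have := hfpos x hx
    simp only [neg_neg, neg_lt, neg_zero]
    positivity
  -- Finv strictly antitone on Ioi 0
  have hIanti : StrictAntiOn Finv (Ioi 0) := by
    intro x hx y hy hxy
    by_contra h
    push_neg at h
    rcases eq_or_lt_of_le h with h | h
    · have := (hFinv x hx).2
      rw [h, (hFinv y hy).2] at this
      exact absurd this.symm hxy.ne
    · have := hFanti (hFinv x hx).1 (hFinv y hy).1 h
      rw [(hFinv x hx).2, (hFinv y hy).2] at this
      exact absurd this (not_lt.2 hxy.le)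
  -- Finv continuous on Ioi 0
  have hIcont : ∀ σ > (0:ℝ), ContinuousAt Finv σ := by
    intro σ hσ
    have hmono : StrictMonoOn (fun x => Finv (-x)) (Iio 0) := by
      intro x hx y hy hxy
      exact hIanti (mem_Ioi.2 (neg_pos.2 (mem_Iio.1 hy))) (mem_Ioi.2 (neg_pos.2 (mem_Iio.1 hx))) (neg_lt_neg hxy)
    have hca : ContinuousAt (fun x => Finv (-x)) (-σ) := by
      refine hmono.continuousAt_of_image_mem_nhds (isOpen_Iio.mem_nhds (by simpa using hσ)) ?_
      have h1 : (0:ℝ) < Finv (-(-σ)) := by rw [neg_neg]; exact (hFinv σ hσ).1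
      refine Filter.mem_of_superset (isOpen_Ioi.mem_nhds h1) ?_
      intro u hu
      exact ⟨-(F u), by simpa using hFpos u hu, by simp [hFinv' u hu]⟩
    have : ContinuousAt (fun x => Finv (- (-x))) σ := hca.comp (continuousAt_neg)
    simpa using this
  -- derivative of Finv
  have hId : ∀ σ > (0:ℝ), HasDerivAt Finv (-(f (Finv σ))) σ := by
    intro σ hσ
    obtain ⟨hI0, hIF⟩ := hFinv σ hσ
    have h := HasDerivAt.of_local_left_inverse (hIcont σ hσ) (hFd (Finv σ) hI0)
      (neg_ne_zero.2 (one_div_ne_zero (ne_of_gt (hfpos _ hI0))))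
      (by filter_upwards [isOpen_Ioi.mem_nhds hσ] with y hy using (hFinv y hy).2)
    have : (-(1 / f (Finv σ)))⁻¹ = -(f (Finv σ)) := by
      field_simp
    rwa [this] at h
  intro s hs
  have hGs := hGpos s hs
  have hφpos : 0 < φ s := by rw [hφ s]; exact (hFinv _ hGs).1
  have hFφ : F (φ s) = G s := by rw [hφ s]; exact (hFinv _ hGs).2
  refine ⟨hφpos, hFφ, ?_⟩
  have hcomp : HasDerivAt (fun t => Finv (G t)) (-(f (Finv (G s))) * -(1 / g s)) s :=
    (hId _ hGs).comp s (hGd s hs)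
  have heq : φ = fun t => Finv (G t) := funext hφ
  rw [heq]
  convert hcomp using 1
  rw [show -f (Finv (G s)) * -(1 / g s) = f (Finv (G s)) / g s by ring]

theorem phi_derivatives_and_convexity
    (f g F G Finv φ : ℝ → ℝ)
    (hfsm : ContDiffOn ℝ 2 f (Ioi 0)) (hgsm : ContDiffOn ℝ 2 g (Ioi 0))
    (hfpos : ∀ s > (0:ℝ), 0 < f s) (hgpos : ∀ s > (0:ℝ), 0 < g s)
    (hf' : ∀ s > (0:ℝ), 0 < deriv f s) (hg' : ∀ s > (0:ℝ), 0 < deriv g s)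
    (hfint : ∀ s > (0:ℝ), IntegrableOn (fun η => 1 / f η) (Ioi s))
    (hgint : ∀ s > (0:ℝ), IntegrableOn (fun η => 1 / g η) (Ioi s))
    (hF : ∀ s > (0:ℝ), F s = ∫ η in Ioi s, 1 / f η)
    (hG : ∀ s > (0:ℝ), G s = ∫ η in Ioi s, 1 / g η)
    (hFinv : ∀ σ > (0:ℝ), 0 < Finv σ ∧ F (Finv σ) = σ)
    (hFinv' : ∀ u > (0:ℝ), Finv (F u) = u)
    (hφ : ∀ s, φ s = Finv (G s)) :
    (∀ s > (0:ℝ),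
      deriv φ s = f (φ s) / g s ∧
      0 < deriv φ s ∧
      deriv (deriv φ) s
        = f (φ s) / (g s ^ 2 * F (φ s)) * (deriv f (φ s) * F (φ s) - deriv g s * G s)) ∧
    (∀ a b : ℝ, 0 < a →
      (∀ s ∈ Ioo a b, deriv g s * G s ≤ deriv f (φ s) * F (φ s)) →
      ConvexOn ℝ (Ioo a b) φ) := by
  have hmain := aux_main f g F G Finv φ hfsm hgsm hfpos hgpos hfint hgint hF hG hFinv hFinv' hφ
  have hGpos : ∀ s > (0:ℝ), 0 < G s := fun s hs => aux_F_pos g G hgpos hgint hG hs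
  have hd1 : ∀ s > (0:ℝ), deriv φ s = f (φ s) / g s := fun s hs => ((hmain s hs).2.2).deriv
  have hd1pos : ∀ s > (0:ℝ), 0 < deriv φ s := by
    intro s hs
    rw [hd1 s hs]
    exact div_pos (hfpos _ (hmain s hs).1) (hgpos s hs)
  have hfd : ∀ x > (0:ℝ), HasDerivAt f (deriv f x) x := fun x hx =>
    ((hfsm.contDiffAt (isOpen_Ioi.mem_nhds hx)).differentiableAt (by norm_num)).hasDerivAt
  have hgd : ∀ x > (0:ℝ), HasDerivAt g (deriv g x) x := fun x hx =>
    ((hgsm.contDiffAt (isOpen_Ioi.mem_nhds hx)).differentiableAt (by norm_num)).hasDerivAt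
  have hd2 : ∀ s > (0:ℝ), HasDerivAt (deriv φ)
      ((deriv f (φ s) * (f (φ s) / g s) * g s - f (φ s) * deriv g s) / g s ^ 2) s := by
    intro s hs
    have hφs := (hmain s hs).1
    have hnum : HasDerivAt (fun t => f (φ t)) (deriv f (φ s) * (f (φ s) / g s)) s :=
      (hfd _ hφs).comp s (hmain s hs).2.2
    have hdiv := hnum.div (hgd s hs) (ne_of_gt (hgpos s hs))
    refine HasDerivAt.congr_of_eventuallyEq hdiv ?_
    filter_upwards [isOpen_Ioi.mem_nhds hs] with t ht using hd1 t ht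
  constructor
  · intro s hs
    refine ⟨hd1 s hs, hd1pos s hs, ?_⟩
    rw [(hd2 s hs).deriv, (hmain s hs).2.1]
    have hb := ne_of_gt (hgpos s hs)
    have hc := ne_of_gt (hGpos s hs)
    field_simp
  · intro a b ha hyp
    have hsub : Ioo a b ⊆ Ioi 0 := fun x hx => lt_trans ha hx.1
    refine convexOn_of_deriv2_nonneg (convex_Ioo a b) ?_ ?_ ?_ ?_
    · exact fun x hx => ((hmain x (hsub hx)).2.2).continuousAt.continuousWithinAt
    · rw [interior_Ioo]
      exact fun x hx => ((hmain x (hsub hx)).2.2).differentiableAt.differentiableWithinAt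
    · rw [interior_Ioo]
      exact fun x hx => (hd2 x (hsub hx)).differentiableAt.differentiableWithinAt
    · rw [interior_Ioo]
      intro x hx
      have hx0 := hsub hx
      have hc := hGpos x hx0
      have hFeq := (hmain x hx0).2.1
      have hpq : deriv g x ≤ deriv f (φ x) := by
        have h := hyp x hx
        rw [hFeq] at h
        exact le_of_mul_le_mul_right h hc
      have ha' := hfpos _ (hmain x hx0).1
      have hb' := hgpos x hx0
      show 0 ≤ deriv (deriv φ) x
      rw [(hd2 x hx0).deriv]
      have heq : deriv f (φ x) * (f (φ x) / g x) * g x - f (φ x) * deriv g x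
          = f (φ x) * (deriv f (φ x) - deriv g x) := by
        field_simp
      rw [heq]
      apply div_nonneg (mul_nonneg ha'.le (by linarith)) (by positivity)
end
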